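/- Let E be a field of characteristic 0, G a group, V a nonzero representation of G over E, and χ: G → Eˣ a group homomorphism with χ(g)² = 1 for all g ∈ G and χ(g₀) = −1 for some g₀ ∈ G; set N = ker χ. Let ψ: V → V be a bijective χ-twisted equivariant E-linear map with ψ ∘ ψ = α · id_V for some α ∈ Eˣ. Suppose V = W₁ ⊕ W₂, where W₁ and W₂ are nonzero N-stable subspaces such that every N-equivariant E-linear map W₁ → W₂ is zero, every N-equivariant E-linear map W₂ → W₁ is zero, and every N-equivariant E-linear endomorphism of W₁, and likewise of W₂, is multiplication by a scalar in E. Then there exists x ∈ Eˣ with x² = α such that ψ restricts to x·id on one of W₁, W₂ and to −x·id on the other; in particular, α is a square in Eˣ. -/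

import Mathlib

/-- if `V = W₁ ⊕ W₂` with `W₁, W₂` nonzero `N`-stable (`N = ker χ`)
subspaces such that there are no nonzero `N`-equivariant maps between `W₁` and `W₂`
and all `N`-equivariant endomorphisms of `W₁` and of `W₂` are scalars, then a bijective
`χ`-twisted equivariant `ψ` with `ψ² = α·id` acts as `x·id` on one summand and as
`-x·id` on the other, for some `x ∈ Eˣ` with `x² = α`; in particular `α` is a square. -/
theorem stmt_9 {E G V : Type*} [Field E] [CharZero E] [Group G]
    [AddCommGroup V] [Module E V] [Nontrivial V]
    (ρ : Representation E G V)
    (χ : G →* Eˣ) (hχ : ∀ g : G, χ g * χ g = 1) (g₀ : G) (hg₀ : χ g₀ = -1)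
    (ψ : Module.End E V) (hbij : Function.Bijective ψ)
    (htw : ∀ (g : G) (v : V), ψ (ρ g v) = (χ g : E) • ρ g (ψ v))
    (α : Eˣ) (hα : ψ * ψ = (α : E) • (1 : Module.End E V))
    (W₁ W₂ : Submodule E V) (hW₁ne : W₁ ≠ ⊥) (hW₂ne : W₂ ≠ ⊥)
    (hW₁st : ∀ g : G, χ g = 1 → ∀ v ∈ W₁, ρ g v ∈ W₁)
    (hW₂st : ∀ g : G, χ g = 1 → ∀ v ∈ W₂, ρ g v ∈ W₂)
    (hcompl : IsCompl W₁ W₂)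
    (hHom12 : ∀ f : W₁ →ₗ[E] W₂,
      (∀ (g : G) (hg : χ g = 1) (v : W₁),
        (f ⟨ρ g (v : V), hW₁st g hg (v : V) v.2⟩ : V) = ρ g ((f v : V))) → f = 0)
    (hHom21 : ∀ f : W₂ →ₗ[E] W₁,
      (∀ (g : G) (hg : χ g = 1) (v : W₂),
        (f ⟨ρ g (v : V), hW₂st g hg (v : V) v.2⟩ : V) = ρ g ((f v : V))) → f = 0)
    (hEnd1 : ∀ f : W₁ →ₗ[E] W₁,
      (∀ (g : G) (hg : χ g = 1) (v : W₁),
        (f ⟨ρ g (v : V), hW₁st g hg (v : V) v.2⟩ : V) = ρ g ((f v : V))) →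
      ∃ c : E, ∀ v : W₁, (f v : V) = c • (v : V))
    (hEnd2 : ∀ f : W₂ →ₗ[E] W₂,
      (∀ (g : G) (hg : χ g = 1) (v : W₂),
        (f ⟨ρ g (v : V), hW₂st g hg (v : V) v.2⟩ : V) = ρ g ((f v : V))) →
      ∃ c : E, ∀ v : W₂, (f v : V) = c • (v : V)) :
    ∃ x : Eˣ, (x : E) ^ 2 = (α : E) ∧
      (((∀ v ∈ W₁, ψ v = (x : E) • v) ∧ (∀ v ∈ W₂, ψ v = -((x : E) • v))) ∨
       ((∀ v ∈ W₁, ψ v = -((x : E) • v)) ∧ (∀ v ∈ W₂, ψ v = (x : E) • v))) := by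

  classical
  set π₁ := W₁.linearProjOfIsCompl W₂ hcompl with hπ₁def
  set π₂ := W₂.linearProjOfIsCompl W₁ hcompl.symm with hπ₂def
  have hsum : ∀ v : V, ((π₁ v : V) + (π₂ v : V)) = v := fun v =>
    Submodule.projection_add_projection_eq_self hcompl v
  -- N-equivariance of ψ
  have hψN : ∀ (g : G), χ g = 1 → ∀ v : V, ψ (ρ g v) = ρ g (ψ v) := by
    intro g hg v
    rw [htw g v, hg]; simp
  -- N-equivariance of the projections
  have hπ₁eq : ∀ (g : G), χ g = 1 → ∀ v : V, (π₁ (ρ g v) : V) = ρ g (π₁ v : V) := by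
    intro g hg v
    have h1 : ρ g v = ρ g (π₁ v : V) + ρ g (π₂ v : V) := by
      rw [← map_add, hsum]
    have a1 : π₁ (ρ g (π₁ v : V)) = (⟨ρ g (π₁ v : V), hW₁st g hg _ (π₁ v).2⟩ : W₁) :=
      Submodule.linearProjOfIsCompl_apply_left hcompl ⟨ρ g (π₁ v : V), hW₁st g hg _ (π₁ v).2⟩
    have a2 : π₁ (ρ g (π₂ v : V)) = 0 :=
      Submodule.projectionOnto_apply_of_mem_right hcompl (hW₂st g hg _ (π₂ v).2)
    rw [h1, map_add, a1, a2, add_zero]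
  have hπ₂eq : ∀ (g : G), χ g = 1 → ∀ v : V, (π₂ (ρ g v) : V) = ρ g (π₂ v : V) := by
    intro g hg v
    have h1 : ρ g v = ρ g (π₁ v : V) + ρ g (π₂ v : V) := by
      rw [← map_add, hsum]
    have a1 : π₂ (ρ g (π₂ v : V)) = (⟨ρ g (π₂ v : V), hW₂st g hg _ (π₂ v).2⟩ : W₂) :=
      Submodule.linearProjOfIsCompl_apply_left hcompl.symm ⟨ρ g (π₂ v : V), hW₂st g hg _ (π₂ v).2⟩
    have a2 : π₂ (ρ g (π₁ v : V)) = 0 :=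
      Submodule.projectionOnto_apply_of_mem_right hcompl.symm (hW₁st g hg _ (π₁ v).2)
    rw [h1, map_add, a1, a2, zero_add]
  -- components of ψ restricted to W₁
  have hf12 : ∀ v : W₁, (π₂ (ψ (v : V)) : V) = 0 := by
    have h := hHom12 (π₂ ∘ₗ ψ ∘ₗ W₁.subtype) ?_
    · intro v
      have := congrFun (congrArg (fun f => (DFunLike.coe f : W₁ → W₂)) h) v
      simpa using congrArg (Subtype.val) this
    · intro g hg v
      simp only [LinearMap.coe_comp, Function.comp_apply, Submodule.coe_subtype]
      rw [hψN g hg, hπ₂eq g hg]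
  have hf21 : ∀ v : W₂, (π₁ (ψ (v : V)) : V) = 0 := by
    have h := hHom21 (π₁ ∘ₗ ψ ∘ₗ W₂.subtype) ?_
    · intro v
      have := congrFun (congrArg (fun f => (DFunLike.coe f : W₂ → W₁)) h) v
      simpa using congrArg (Subtype.val) this
    · intro g hg v
      simp only [LinearMap.coe_comp, Function.comp_apply, Submodule.coe_subtype]
      rw [hψN g hg, hπ₁eq g hg]
  obtain ⟨c₁, hc₁⟩ := hEnd1 (π₁ ∘ₗ ψ ∘ₗ W₁.subtype) (by
    intro g hg v
    simp only [LinearMap.coe_comp, Function.comp_apply, Submodule.coe_subtype]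
    rw [hψN g hg, hπ₁eq g hg])
  obtain ⟨c₂, hc₂⟩ := hEnd2 (π₂ ∘ₗ ψ ∘ₗ W₂.subtype) (by
    intro g hg v
    simp only [LinearMap.coe_comp, Function.comp_apply, Submodule.coe_subtype]
    rw [hψN g hg, hπ₂eq g hg])
  have hψ1 : ∀ v ∈ W₁, ψ v = c₁ • v := by
    intro v hv
    have := hsum (ψ v)
    have h1 : (π₁ (ψ v) : V) = c₁ • v := hc₁ ⟨v, hv⟩
    have h2 : (π₂ (ψ v) : V) = 0 := hf12 ⟨v, hv⟩
    rw [h1, h2, add_zero] at this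
    exact this.symm
  have hψ2 : ∀ v ∈ W₂, ψ v = c₂ • v := by
    intro v hv
    have := hsum (ψ v)
    have h1 : (π₂ (ψ v) : V) = c₂ • v := hc₂ ⟨v, hv⟩
    have h2 : (π₁ (ψ v) : V) = 0 := hf21 ⟨v, hv⟩
    rw [h1, h2, zero_add] at this
    exact this.symm
  -- nonzero vectors
  obtain ⟨v₁, hv₁W, hv₁⟩ := Submodule.exists_mem_ne_zero_of_ne_bot hW₁ne
  obtain ⟨v₂, hv₂W, hv₂⟩ := Submodule.exists_mem_ne_zero_of_ne_bot hW₂ne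
  -- c₁² = α
  have hsq1 : c₁ ^ 2 = (α : E) := by
    have h1 : ψ (ψ v₁) = (α : E) • v₁ := by
      have := congrFun (congrArg (fun f => (DFunLike.coe f : V → V)) hα) v₁
      simpa using this
    have h2 : ψ (ψ v₁) = c₁ ^ 2 • v₁ := by
      rw [hψ1 v₁ hv₁W, map_smul, hψ1 v₁ hv₁W, smul_smul, sq]
    have := h1.symm.trans h2
    have h3 : (c₁ ^ 2 - (α : E)) • v₁ = 0 := by
      rw [sub_smul, this, sub_self]
    rcases smul_eq_zero.mp h3 with h | h
    · exact sub_eq_zero.mp h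
    · exact absurd h hv₁
  have hc₁ne : c₁ ≠ 0 := by
    intro h
    apply α.ne_zero
    rw [← hsq1, h]; ring
  -- use g₀ : decompose ρ g₀ v₁
  have hu : ψ (ρ g₀ v₁) = -(c₁ • ρ g₀ v₁) := by
    rw [htw g₀ v₁, hg₀, hψ1 v₁ hv₁W, map_smul]
    simp [smul_smul]
  set u := ρ g₀ v₁ with hudef
  have hune : u ≠ 0 := by
    intro h
    have : ρ g₀⁻¹ (ρ g₀ v₁) = 0 := by rw [← hudef, h, map_zero]
    rw [← Module.End.mul_apply, ← map_mul, inv_mul_cancel, map_one, Module.End.one_apply] at this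
    exact hv₁ this
  have hudec : u = (π₁ u : V) + (π₂ u : V) := (hsum u).symm
  have hψu : ψ u = c₁ • (π₁ u : V) + c₂ • (π₂ u : V) := by
    conv_lhs => rw [hudec]
    rw [map_add, hψ1 _ (π₁ u).2, hψ2 _ (π₂ u).2]
  have hψu' : ψ u = -(c₁ • (π₁ u : V)) + -(c₁ • (π₂ u : V)) := by
    rw [hu]
    conv_lhs => rw [hudec]
    rw [smul_add, neg_add]
  have hkey : (c₁ + c₁) • (π₁ u : V) + (c₂ + c₁) • (π₂ u : V) = 0 := by
    have := hψu.symm.trans hψu'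
    rw [add_smul, add_smul]
    have e : c₁ • (π₁ u : V) + c₂ • (π₂ u : V) - (-(c₁ • (π₁ u : V)) + -(c₁ • (π₂ u : V))) = 0 := by
      rw [← this]; abel
    calc c₁ • (π₁ u : V) + c₁ • (π₁ u : V) + (c₂ • (π₂ u : V) + c₁ • (π₂ u : V))
        = c₁ • (π₁ u : V) + c₂ • (π₂ u : V) - (-(c₁ • (π₁ u : V)) + -(c₁ • (π₂ u : V))) := by abel
      _ = 0 := e
  -- split : both components zero
  have hmem1 : (c₁ + c₁) • (π₁ u : V) ∈ W₁ := W₁.smul_mem _ (π₁ u).2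
  have hmem2 : (c₂ + c₁) • (π₂ u : V) ∈ W₂ := W₂.smul_mem _ (π₂ u).2
  have hboth : (c₁ + c₁) • (π₁ u : V) = 0 ∧ (c₂ + c₁) • (π₂ u : V) = 0 := by
    have h1 : (c₁ + c₁) • (π₁ u : V) = -((c₂ + c₁) • (π₂ u : V)) := by
      rw [eq_neg_iff_add_eq_zero]; exact hkey
    have hmem : (c₁ + c₁) • (π₁ u : V) ∈ W₁ ⊓ W₂ :=
      ⟨hmem1, by rw [h1]; exact W₂.neg_mem hmem2⟩
    rw [hcompl.inf_eq_bot, Submodule.mem_bot] at hmem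
    refine ⟨hmem, ?_⟩
    have := hkey
    rw [hmem, zero_add] at this
    exact this
  have h2c₁ : (c₁ + c₁ : E) ≠ 0 := by
    intro h
    apply hc₁ne
    have : (2 : E) * c₁ = 0 := by rw [two_mul]; exact h
    rcases mul_eq_zero.mp this with h' | h'
    · exact absurd h' two_ne_zero
    · exact h'
  have hπ₁u : (π₁ u : V) = 0 := by
    rcases smul_eq_zero.mp hboth.1 with h | h
    · exact absurd h h2c₁
    · exact h
  have hπ₂une : (π₂ u : V) ≠ 0 := by
    intro h
    apply hune
    rw [hudec, hπ₁u, h, add_zero]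
  have hc₂eq : c₂ = -c₁ := by
    rcases smul_eq_zero.mp hboth.2 with h | h
    · exact eq_neg_of_add_eq_zero_left h
    · exact absurd h hπ₂une
  refine ⟨Units.mk0 c₁ hc₁ne, by simpa using hsq1, Or.inl ⟨?_, ?_⟩⟩
  · intro v hv; simpa using hψ1 v hv
  · intro v hv
    rw [hψ2 v hv, hc₂eq]
    simp [neg_smul]
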